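/- The function g : ℕ → ℝ defined by g(k) = (F(k) + F(k+1))/2 is discretely convex: for every k ≥ 1, 2·g(k) ≤ g(k−1) + g(k+1). -/
import Mathlib


/-- `F(m) = C(m, ⌊m/2⌋) · 2^{−m}`. -/
noncomputable def F' (m : ℕ) : ℝ := (m.choose (m / 2) : ℝ) / 2 ^ m

lemma choose_odd_key (n : ℕ) : (n + 1) * (2 * n + 1).choose n = (2 * n + 1) * (2 * n).choose n := by
  have h1 := Nat.add_one_mul_choose_eq (2 * n) n
  have h2 : (2 * n + 1).choose (n + 1) = (2 * n + 1).choose n := by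
    have := Nat.choose_symm (n := 2 * n + 1) (k := n + 1) (by omega)
    have he : 2 * n + 1 - (n + 1) = n := by omega
    rw [he] at this
    omega
  rw [h2] at h1
  simpa [Nat.succ_eq_add_one, Nat.mul_comm] using h1.symm

lemma FA (n : ℕ) : F' (2 * n + 1) = F' (2 * n) * (2 * n + 1) / (2 * n + 2) := by
  have hd1 : (2 * n + 1) / 2 = n := by omega
  have hd2 : (2 * n) / 2 = n := by omega
  have hk := choose_odd_key n
  have hkr : ((n : ℝ) + 1) * ((2 * n + 1).choose n : ℝ) = (2 * (n : ℝ) + 1) * ((2 * n).choose n : ℝ) := by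
    exact_mod_cast congrArg (Nat.cast (R := ℝ)) hk
  simp only [F', hd1, hd2]
  have hp : (2 : ℝ) ^ (2 * n) > 0 := by positivity
  have hn : (n : ℝ) + 1 > 0 := by positivity
  rw [pow_succ]
  field_simp
  nlinarith [hkr]

lemma FB (n : ℕ) : F' (2 * n + 2) = F' (2 * n + 1) := by
  have hd1 : (2 * n + 2) / 2 = n + 1 := by omega
  have hd2 : (2 * n + 1) / 2 = n := by omega
  have hc : (2 * n + 2).choose (n + 1) = 2 * (2 * n + 1).choose n := by
    rw [Nat.choose_succ_succ]
    have h2 : (2 * n + 1).choose (n + 1) = (2 * n + 1).choose n := by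
      have := Nat.choose_symm (n := 2 * n + 1) (k := n + 1) (by omega)
      have he : 2 * n + 1 - (n + 1) = n := by omega
      rw [he] at this
      exact this.symm
    simp only [Nat.succ_eq_add_one]
    rw [h2]
    omega
  simp only [F', hd1, hd2, hc]
  push_cast
  rw [pow_succ]
  ring

lemma aux_ineq (x a : ℝ) (hx : 0 ≤ x) (ha : 0 ≤ a) :
    2 * ((x * (2 * a + 1) / (2 * a + 2) + x * (2 * a + 1) / (2 * a + 2)) / 2) ≤
      (x + x * (2 * a + 1) / (2 * a + 2)) / 2 +
        (x * (2 * a + 1) / (2 * a + 2) +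
          x * (2 * a + 1) / (2 * a + 2) * (2 * (a + 1) + 1) / (2 * (a + 1) + 2)) / 2 := by
  have h1 : (0:ℝ) < 2 * a + 2 := by linarith
  have h2 : (0:ℝ) < 2 * (a + 1) + 2 := by linarith
  rw [← sub_nonneg]
  have e : (x + x * (2 * a + 1) / (2 * a + 2)) / 2 +
        (x * (2 * a + 1) / (2 * a + 2) +
          x * (2 * a + 1) / (2 * a + 2) * (2 * (a + 1) + 1) / (2 * (a + 1) + 2)) / 2 -
      2 * ((x * (2 * a + 1) / (2 * a + 2) + x * (2 * a + 1) / (2 * a + 2)) / 2) =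
      3 * x / (2 * ((2 * a + 2) * (2 * (a + 1) + 2))) := by
    field_simp
    ring
  rw [e]
  positivity

/-- The function `g(k) = (F(k) + F(k+1))/2` is discretely convex:
`2 g(k) ≤ g(k−1) + g(k+1)` for all `k ≥ 1`. -/
theorem g_discretely_convex
    (g : ℕ → ℝ) (hg : ∀ k, g k = (F' k + F' (k + 1)) / 2) :
    ∀ k, 1 ≤ k → 2 * g k ≤ g (k - 1) + g (k + 1) := by
  intro k hk
  rcases Nat.even_or_odd k with ⟨n, hn⟩ | ⟨n, hn⟩
  · -- k = 2n, n ≥ 1, write k = 2(m+1) = 2m+2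
    obtain ⟨m, rfl⟩ : ∃ m, n = m + 1 := ⟨n - 1, by omega⟩
    have hk2 : k = 2 * m + 2 := by omega
    subst hk2
    have e1 : 2 * m + 2 - 1 = 2 * m + 1 := by omega
    rw [hg, hg, hg, e1]
    have h1 := FB m
    have h2 := FB (m + 1)
    have e2 : 2 * (m + 1) + 2 = 2 * m + 4 := by ring_nf
    have e3 : 2 * (m + 1) + 1 = 2 * m + 3 := by ring_nf
    rw [e2, e3] at h2
    have e4 : 2 * m + 2 + 1 = 2 * m + 3 := by omega
    have e5 : 2 * m + 3 + 1 = 2 * m + 4 := by omega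
    rw [e4, e5]
    linarith
  · -- k = 2n+1
    have hk2 : k = 2 * n + 1 := by omega
    subst hk2
    have e1 : 2 * n + 1 - 1 = 2 * n := by omega
    rw [hg, hg, hg, e1]
    have hA1 := FA n
    have hB1 := FB n
    have hA2 := FA (n + 1)
    have e2 : 2 * (n + 1) + 1 = 2 * n + 3 := by ring_nf
    have e3 : 2 * (n + 1) = 2 * n + 2 := by ring_nf
    rw [e2, e3] at hA2
    have e4 : 2 * n + 1 + 1 = 2 * n + 2 := by omega
    have e5 : 2 * n + 2 + 1 = 2 * n + 3 := by omega
    rw [e4, e5]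
    -- reduce everything to x = F'(2n) ≥ 0
    set x := F' (2 * n) with hx
    have hx0 : 0 ≤ x := by
      rw [hx]; unfold F'; positivity
    push_cast at hA1 hA2
    rw [hA1] at hB1
    rw [hB1] at hA2
    rw [hA1, hB1, hA2]
    have hd1 : (0:ℝ) < 2 * n + 2 := by positivity
    have hd2 : (0:ℝ) < 2 * n + 4 := by positivity
    exact aux_ineq x n hx0 (Nat.cast_nonneg n)
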